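/- Let p ∈ ℝ² and let F be a finite family of subsets of ℝ², each member of which is either an open ball Metric.ball c ρ or the complement of a closed ball (Metric.closedBall c ρ)ᶜ, where in each case ρ > 0 and dist p c = ρ (so p lies on the bounding circle). Then the intersection ⋂₀ F is a preconnected subset of ℝ². -/

import Mathlib

noncomputable section

open Real

abbrev Pt : Type := EuclideanSpace ℝ (Fin 2)

instance : Fact (Module.finrank ℝ Pt = 2) := ⟨finrank_euclideanSpace_fin⟩

noncomputable def stdOrient : Orientation ℝ Pt (Fin 2) :=
  (EuclideanSpace.basisFun (Fin 2) ℝ).toBasis.orientation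

/-- A ray in the plane, given by its apex and its direction vector. -/
structure Ray2 where
  apex : Pt
  dir : Pt

/-- The set of points of a ray. -/
def Ray2.carrier (r : Ray2) : Set Pt := {x | ∃ t : ℝ, 0 ≤ t ∧ x = r.apex + t • r.dir}

/-- The representative in `[0, 2π)` of an angle. -/
noncomputable def angleIco (θ : Real.Angle) : ℝ :=
  if 0 ≤ θ.toReal then θ.toReal else θ.toReal + 2 * π

open Classical in
/-- The counterclockwise angular distance from a point `x` to a ray `r`. -/
noncomputable def adist (x : Pt) (r : Ray2) : ℝ :=
  if x = r.apex then 0 else angleIco (stdOrient.oangle r.dir (x - r.apex))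

/-- The Voronoi region of a ray `r` in a finite set of rays `R`. -/
def rreg (R : Finset Ray2) (r : Ray2) : Set Pt :=
  {x | ∀ s ∈ R, s ≠ r → adist x r < adist x s}

/-- The rotating rays Voronoi diagram. -/
def RVD (R : Finset Ray2) : Set Pt :=
  (Set.univ \ ⋃ r ∈ R, rreg R r) ∪ ⋃ r ∈ R, r.carrier

/-- The point of the plane with the given coordinates. -/
noncomputable def pt (a b : ℝ) : Pt := (WithLp.equiv 2 (Fin 2 → ℝ)).symm ![a, b]


section Stmt13Aux

set_option autoImplicit false

open Set Metric
open scoped RealInnerProductSpace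

variable (p : Pt)

lemma pt_rank : 1 < Module.rank ℝ Pt := by
  have h := Module.finrank_eq_rank ℝ Pt
  rw [finrank_euclideanSpace_fin] at h
  rw [← h]
  norm_num

lemma aux_conn {U : Set Pt} (hc : Convex ℝ U) (ho : IsOpen U) (x : Pt) :
    IsPreconnected (U \ {x}) := by
  rcases em (x ∈ U) with hx | hx
  · obtain ⟨r, hr, hball⟩ := Metric.isOpen_iff.1 ho x hx
    have hsp : IsPathConnected (Metric.sphere x (r/2)) :=
      isPathConnected_sphere pt_rank x (by positivity)
    have hsub : Metric.sphere x (r/2) ⊆ U \ {x} := by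
      intro y hy
      rw [mem_sphere] at hy
      refine ⟨hball ?_, ?_⟩
      · rw [mem_ball, hy]; linarith
      · simp only [mem_singleton_iff]
        intro h; rw [h] at hy; simp at hy; linarith
    -- key: join any a ∈ U \ {x} to the sphere
    have key : ∀ a ∈ U \ {x}, ∃ w ∈ Metric.sphere x (r/2), JoinedIn (U \ {x}) a w := by
      intro a ⟨haU, hax⟩
      rw [mem_singleton_iff] at hax
      have hax' : a - x ≠ 0 := sub_ne_zero.2 hax
      have hn : (0:ℝ) < ‖a - x‖ := norm_pos_iff.2 hax'
      set c : ℝ := (r/2) * ‖a - x‖⁻¹ with hc_def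
      have hcpos : 0 < c := by positivity
      set w : Pt := x + c • (a - x) with hw_def
      have hwsph : w ∈ Metric.sphere x (r/2) := by
        rw [mem_sphere, dist_eq_norm]
        simp only [hw_def, add_sub_cancel_left, norm_smul, Real.norm_eq_abs,
          abs_of_pos hcpos, hc_def]
        field_simp
        rw [abs_of_pos (by positivity)]
        field_simp
      refine ⟨w, hwsph, JoinedIn.of_segment_subset ?_⟩
      have hseg : segment ℝ a w ⊆ U := hc.segment_subset haU (hsub hwsph).1
      intro y hy
      refine ⟨hseg hy, ?_⟩
      rw [segment_eq_image'] at hy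
      obtain ⟨t, ⟨ht0, ht1⟩, rfl⟩ := hy
      have hwa : w - a = (c - 1) • (a - x) := by
        rw [hw_def]; module
      simp only [mem_singleton_iff, hwa, ← smul_assoc, smul_eq_mul]
      intro h
      have h2 : a + (t * (c-1)) • (a - x) - x = 0 := by rw [h]; simp
      have h3 : (1 + t * (c-1)) • (a - x) = 0 := by
        rw [← h2]; module
      rcases smul_eq_zero.1 h3 with h4 | h4
      · nlinarith [mul_nonneg ht0 hcpos.le]
      · exact hax' h4
    obtain ⟨z, hz, -⟩ := hsp
    have hsp' : IsPathConnected (Metric.sphere x (r/2)) :=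
      isPathConnected_sphere pt_rank x (by positivity)
    have hpc : IsPathConnected (U \ {x}) := by
      refine ⟨z, hsub hz, ?_⟩
      intro a ha
      obtain ⟨w, hwsph, hjoin⟩ := key a ha
      exact (hjoin.trans ((hsp'.joinedIn w hwsph z hz).mono hsub)).symm
    exact hpc.isConnected.isPreconnected
  · rw [Set.diff_singleton_eq_self hx]
    exact hc.isPreconnected

noncomputable def ginv (p : Pt) : Pt → Pt := fun w => p + (‖w‖^2)⁻¹ • w

lemma ginv_dist_sq (c0 : Pt) (ρ0 : ℝ) (hd0 : dist p c0 = ρ0) (w : Pt) (hw : w ≠ 0) :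
    dist (ginv p w) c0 ^ 2 - ρ0 ^ 2 = (‖w‖^2)⁻¹ * (1 - 2 * ⟪w, c0 - p⟫) := by
  have hnw : (0:ℝ) < ‖w‖ := norm_pos_iff.2 hw
  have hq : ‖c0 - p‖ = ρ0 := by rw [← hd0, dist_eq_norm, norm_sub_rev]
  have h1 : ginv p w - c0 = (‖w‖^2)⁻¹ • w - (c0 - p) := by
    simp only [ginv]; abel
  rw [dist_eq_norm, h1, @norm_sub_sq_real, norm_smul, real_inner_smul_left, hq,
    Real.norm_eq_abs, abs_of_pos (by positivity : (0:ℝ) < (‖w‖^2)⁻¹)]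
  field_simp
  ring

lemma ginv_mem_ball (c0 : Pt) (ρ0 : ℝ) (hd0 : dist p c0 = ρ0) (w : Pt) (hw : w ≠ 0) :
    ginv p w ∈ Metric.ball c0 ρ0 ↔ 1 < 2 * ⟪w, c0 - p⟫ := by
  have hkey := ginv_dist_sq p c0 ρ0 hd0 w hw
  have hnw : (0:ℝ) < ‖w‖ := norm_pos_iff.2 hw
  have hs : (0:ℝ) < (‖w‖^2)⁻¹ := by positivity
  have hρ0 : 0 ≤ ρ0 := by rw [← hd0]; exact dist_nonneg
  rw [mem_ball]
  constructor
  · intro h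
    have h2 : dist (ginv p w) c0 ^ 2 < ρ0 ^ 2 := by
      have := dist_nonneg (x := ginv p w) (y := c0)
      nlinarith
    nlinarith
  · intro h
    have h2 : dist (ginv p w) c0 ^ 2 < ρ0 ^ 2 := by nlinarith
    nlinarith [dist_nonneg (x := ginv p w) (y := c0)]

lemma ginv_mem_compl (c0 : Pt) (ρ0 : ℝ) (hd0 : dist p c0 = ρ0) (w : Pt) (hw : w ≠ 0) :
    ginv p w ∈ (Metric.closedBall c0 ρ0)ᶜ ↔ 2 * ⟪w, c0 - p⟫ < 1 := by
  have hkey := ginv_dist_sq p c0 ρ0 hd0 w hw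
  have hnw : (0:ℝ) < ‖w‖ := norm_pos_iff.2 hw
  have hs : (0:ℝ) < (‖w‖^2)⁻¹ := by positivity
  have hρ0 : 0 ≤ ρ0 := by rw [← hd0]; exact dist_nonneg
  rw [mem_compl_iff, mem_closedBall, not_le]
  constructor
  · intro h
    have h2 : ρ0 ^ 2 < dist (ginv p w) c0 ^ 2 := by nlinarith
    nlinarith
  · intro h
    have h2 : ρ0 ^ 2 < dist (ginv p w) c0 ^ 2 := by nlinarith
    nlinarith [dist_nonneg (x := ginv p w) (y := c0)]

lemma ginv_inv (x : Pt) (hx : x ≠ p) :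
    ginv p ((‖x - p‖^2)⁻¹ • (x - p)) = x := by
  have hxp : x - p ≠ 0 := sub_ne_zero.2 hx
  have hn : (0:ℝ) < ‖x - p‖ := norm_pos_iff.2 hxp
  have hnorm : ‖(‖x - p‖^2)⁻¹ • (x - p)‖^2 = (‖x - p‖^2)⁻¹ := by
    rw [norm_smul, Real.norm_eq_abs, abs_of_pos (by positivity)]
    field_simp
  rw [ginv, hnorm, inv_inv, smul_smul]
  rw [mul_inv_cancel₀ (by positivity)]
  simp


end Stmt13Aux

open Set Metric in
open scoped RealInnerProductSpace in
/-- a finite intersection of open disks and of complements of closed disks,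
all of whose bounding circles pass through a common point `p`, is preconnected. -/
theorem stmt13 (p : Pt) (F : Finset (Set Pt))
    (hF : ∀ S ∈ F, ∃ (c : Pt) (ρ : ℝ), 0 < ρ ∧ dist p c = ρ ∧
      (S = Metric.ball c ρ ∨ S = (Metric.closedBall c ρ)ᶜ)) :
    IsPreconnected (⋂₀ (F : Set (Set Pt))) := by
  classical
  rcases F.eq_empty_or_nonempty with rfl | ⟨S₀, hS₀⟩
  · simp only [Finset.coe_empty, Set.sInter_empty]
    exact isPreconnected_univ
  choose! c ρ hρ hd hS using hF
  set H : Set Pt → Set Pt := fun S =>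
    if S = Metric.ball (c S) (ρ S) then {w | 1 < 2 * ⟪w, c S - p⟫}
    else {w | 2 * ⟪w, c S - p⟫ < 1} with hH_def
  have lin : ∀ q : Pt, IsLinearMap ℝ (fun w : Pt => 2 * ⟪w, q⟫) := fun q =>
    ⟨fun a b => by rw [inner_add_left]; ring, fun r a => by rw [real_inner_smul_left, smul_eq_mul]; ring⟩
  have hHconv : ∀ S, Convex ℝ (H S) := by
    intro S
    by_cases hb : S = Metric.ball (c S) (ρ S)
    · simp only [hH_def, if_pos hb]
      exact convex_halfSpace_gt (lin _) 1
    · simp only [hH_def, if_neg hb]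
      exact convex_halfSpace_lt (lin _) 1
  have hHopen : ∀ S, IsOpen (H S) := by
    intro S
    have hcont : Continuous fun w : Pt => 2 * ⟪w, c S - p⟫ :=
      continuous_const.mul (continuous_id.inner continuous_const)
    by_cases hb : S = Metric.ball (c S) (ρ S)
    · simp only [hH_def, if_pos hb]
      exact isOpen_lt continuous_const hcont
    · simp only [hH_def, if_neg hb]
      exact isOpen_lt hcont continuous_const
  have hHiff : ∀ S ∈ F, ∀ w : Pt, w ≠ 0 → (ginv p w ∈ S ↔ w ∈ H S) := by
    intro S hSF w hw
    by_cases hb : S = Metric.ball (c S) (ρ S)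
    · simp only [hH_def, if_pos hb, Set.mem_setOf_eq]
      conv_lhs => rw [hb]
      exact ginv_mem_ball p (c S) (ρ S) (hd S hSF) w hw
    · simp only [hH_def, if_neg hb]
      rcases hS S hSF with h' | h'
      · exact absurd h' hb
      · simp only [Set.mem_setOf_eq]
        conv_lhs => rw [h']
        exact ginv_mem_compl p (c S) (ρ S) (hd S hSF) w hw
  set T : Set Pt := ⋂ S ∈ F, H S with hT_def
  have hmain : ⋂₀ (F : Set (Set Pt)) = ginv p '' (T \ {0}) := by
    apply Set.Subset.antisymm
    · intro x hx
      have hxp : x ≠ p := by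
        intro h
        subst h
        have hx0 := hx S₀ hS₀
        rcases hS S₀ hS₀ with h' | h'
        · rw [h', mem_ball] at hx0
          rw [hd S₀ hS₀] at hx0
          exact lt_irrefl _ hx0
        · rw [h', mem_compl_iff, mem_closedBall] at hx0
          exact hx0 (le_of_eq (hd S₀ hS₀))
      set w : Pt := (‖x - p‖^2)⁻¹ • (x - p) with hw_def
      have hxp' : x - p ≠ 0 := sub_ne_zero.2 hxp
      have hn : (0:ℝ) < ‖x - p‖ := norm_pos_iff.2 hxp'
      have hw0 : w ≠ 0 := smul_ne_zero (inv_ne_zero (by positivity)) hxp'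
      have hgw : ginv p w = x := ginv_inv p x hxp
      refine ⟨w, ⟨?_, hw0⟩, hgw⟩
      rw [hT_def, mem_iInter₂]
      intro S hSF
      exact (hHiff S hSF w hw0).1 (hgw ▸ hx S hSF)
    · rintro x ⟨w, ⟨hwT, hw0⟩, rfl⟩
      rw [mem_sInter]
      intro S hSF
      rw [hT_def, mem_iInter₂] at hwT
      exact (hHiff S hSF w (by simpa using hw0)).2 (hwT S hSF)
  rw [hmain]
  have hTconv : Convex ℝ T := by
    rw [hT_def]
    exact convex_iInter fun S => convex_iInter fun _ => hHconv S
  have hTopen : IsOpen T := by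
    rw [hT_def]
    exact isOpen_biInter_finset fun S _ => hHopen S
  have hgcont : ContinuousOn (ginv p) (T \ {0}) := by
    apply ContinuousOn.add continuousOn_const
    refine ContinuousOn.smul (f := fun w : Pt => (‖w‖ ^ 2)⁻¹) (g := fun w : Pt => w) ?_ ?_
    · apply ContinuousOn.inv₀ ((continuous_norm.pow 2).continuousOn)
      intro w hw
      exact pow_ne_zero 2 (norm_ne_zero_iff.2 hw.2)
    · exact continuousOn_id
  exact ((aux_conn hTconv hTopen 0).image _ hgcont)
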